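/- Let f : X → X be a map on a set X and v : ℤ₊ × X → ℝ a subadditive cocycle over f with ω := sup over n ≥ 1 and x ∈ X of |v_n(x)|/n finite. Then for every x ∈ X, n ≥ 1 and ε ∈ (0, 2ω), there exists a time 0 ≤ n₁ < n such that (1/k) v_k(f^{n₁}(x)) > (1/n) v_n(x) − ε for all 0 < k ≤ n − n₁, and moreover n − n₁ ≥ εn/(2ω). -/

import Mathlib

/-- For a subadditive cocycle `v` over `f` with `|v_n(x)| ≤ ω n`, for every
`x`, `n ≥ 1` and `ε ∈ (0, 2ω)` there is `0 ≤ n₁ < n` with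
`(1/k) v_k(f^{n₁}(x)) > (1/n) v_n(x) − ε` for all `0 < k ≤ n − n₁`, and
`n − n₁ ≥ ε n/(2ω)`. -/
theorem stmt_2 {X : Type*} (f : X → X) (v : ℕ → X → ℝ)
    (hsub : ∀ (n m : ℕ) (x : X), v (n + m) x ≤ v n x + v m (f^[n] x))
    (ω : ℝ) (hω : ∀ (n : ℕ) (x : X), 0 < n → |v n x| ≤ ω * n)
    (x : X) (n : ℕ) (hn : 0 < n) (ε : ℝ) (hε0 : 0 < ε) (hε2 : ε < 2 * ω) :
    ∃ n₁ : ℕ, n₁ < n ∧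
      (∀ k : ℕ, 0 < k → k ≤ n - n₁ → v n x / n - ε < v k (f^[n₁] x) / k) ∧
      ε * n / (2 * ω) ≤ ((n : ℝ) - n₁) := by
  have hω0 : 0 < ω := by linarith
  have hnR : (0:ℝ) < n := by exact_mod_cast hn
  set a : ℝ := v n x / n - ε with ha
  by_cases hcase : a < -ω
  · -- trivial case: the bound a is below -ω
    refine ⟨0, hn, ?_, ?_⟩
    · intro k hk _
      have hkR : (0:ℝ) < k := by exact_mod_cast hk
      have h1 : |v k (f^[0] x)| ≤ ω * k := by simpa using hω k x hk
      have h2 : -(ω * k) ≤ v k (f^[0] x) := (abs_le.1 h1).1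
      rw [lt_div_iff₀ hkR]
      nlinarith [mul_lt_mul_of_pos_right hcase hkR]
    · simp only [Nat.cast_zero, sub_zero]
      rw [div_le_iff₀ (by linarith : (0:ℝ) < 2 * ω)]
      nlinarith
  · push_neg at hcase
    set D : ℕ → ℝ := fun m => if m = 0 then 0 else v m x - m * a with hD
    obtain ⟨m₀, hm₀, hm₀min⟩ := Finset.exists_min_image (Finset.range n) D
      ⟨0, Finset.mem_range.2 hn⟩
    set S := (Finset.range n).filter (fun m => ∀ j ∈ Finset.range n, D m ≤ D j) with hS
    have hSne : S.Nonempty := ⟨m₀, Finset.mem_filter.2 ⟨hm₀, hm₀min⟩⟩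
    set n₁ := S.max' hSne with hn₁def
    have hn₁S : n₁ ∈ S := S.max'_mem hSne
    have hn₁lt : n₁ < n := Finset.mem_range.1 (Finset.mem_filter.1 hn₁S).1
    have hmin : ∀ j ∈ Finset.range n, D n₁ ≤ D j := (Finset.mem_filter.1 hn₁S).2
    have hD0 : D n₁ ≤ 0 := by simpa [hD] using hmin 0 (Finset.mem_range.2 hn)
    have hDn : D n = n * ε := by
      simp only [hD]
      rw [if_neg hn.ne']
      rw [ha]
      field_simp
      ring
    have hkey : ∀ j, n₁ < j → j ≤ n → D n₁ < D j := by
      intro j hj1 hj2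
      rcases lt_or_eq_of_le hj2 with h | h
      · by_contra hcon
        push_neg at hcon
        have hjS : j ∈ S := Finset.mem_filter.2 ⟨Finset.mem_range.2 h,
          fun i hi => le_trans hcon (hmin i hi)⟩
        exact absurd (Finset.le_max' S j hjS) (not_le.2 hj1)
      · subst h
        rw [hDn]
        nlinarith
    refine ⟨n₁, hn₁lt, ?_, ?_⟩
    · intro k hk hk2
      have hnk : n₁ + k ≤ n := by omega
      have hkR : (0:ℝ) < k := by exact_mod_cast hk
      rw [lt_div_iff₀ hkR]
      have hDj : D n₁ < D (n₁ + k) := hkey (n₁ + k) (by omega) hnk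
      simp only [hD] at hDj
      rw [if_neg (by omega : n₁ + k ≠ 0)] at hDj
      rcases Nat.eq_zero_or_pos n₁ with h0 | hpos
      · rw [if_pos h0] at hDj
        rw [h0] at hDj ⊢
        simp only [Function.iterate_zero, id_eq, zero_add] at hDj ⊢
        linarith
      · rw [if_neg hpos.ne'] at hDj
        have hs := hsub n₁ k x
        push_cast at hDj
        linarith
    · rcases Nat.eq_zero_or_pos n₁ with h0 | hpos
      · rw [h0]
        simp only [Nat.cast_zero, sub_zero]
        rw [div_le_iff₀ (by linarith : (0:ℝ) < 2 * ω)]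
        nlinarith
      · have hv1 : v n₁ x - n₁ * a ≤ 0 := by
          have h := hD0
          simp only [hD] at h
          rwa [if_neg hpos.ne'] at h
        have hs := hsub n₁ (n - n₁) x
        rw [Nat.add_sub_cancel' hn₁lt.le] at hs
        have hω2 := hω (n - n₁) (f^[n₁] x) (by omega)
        have hcast : ((n - n₁ : ℕ):ℝ) = (n:ℝ) - n₁ := by
          push_cast [Nat.cast_sub hn₁lt.le]; ring
        rw [hcast] at hω2
        have h3 : v (n - n₁) (f^[n₁] x) ≤ ω * ((n:ℝ) - n₁) := (abs_le.1 hω2).2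
        have hn₁R : (0:ℝ) < n₁ := by exact_mod_cast hpos
        have hn₁ltR : (n₁:ℝ) < n := by exact_mod_cast hn₁lt
        have hu : v n x = (v n x / n) * n := (div_mul_cancel₀ _ hnR.ne').symm
        set u : ℝ := v n x / n with huu
        rw [ha] at hv1
        have key : (n₁:ℝ) * ε ≤ ((n:ℝ) - n₁) * (ω - u) := by nlinarith [hv1, hs, h3, hu]
        have key2 : ((n:ℝ) - n₁) * (ω - u) ≤ ((n:ℝ) - n₁) * (2 * ω - ε) := by
          apply mul_le_mul_of_nonneg_left _ (by linarith)
          linarith [hcase]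
        rw [div_le_iff₀ (by linarith : (0:ℝ) < 2 * ω)]
        nlinarith
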